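/- (Vanishing of the Toda off-diagonal entries.) For every 1 ≤ j ≤ N−1, the quantity a_j(x)² = τ_{j+1}(x) τ_{j−1}(x) / τ_j(x)² tends to 0 both as x → +∞ and as x → −∞. -/

import Mathlib

open Filter

open Finset in
lemma toda_key_min (N j : ℕ) (k : ℕ → ℝ)
    (hkle : ∀ a b, 1 ≤ a → a ≤ b → b ≤ N → k a ≤ k b)
    (S : Finset ℕ) (hsub : S ⊆ Finset.Icc 1 N) (hcard : S.card = j) :
    ∑ l ∈ Finset.Icc 1 j, k l ≤ ∑ l ∈ S, k l := by
  set g := S.orderEmbOfFin hcard with hg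
  have hmem : ∀ i : Fin j, g i ∈ S := fun i => S.orderEmbOfFin_mem hcard i
  have hbd : ∀ i : Fin j, 1 ≤ g i ∧ g i ≤ N := by
    intro i
    have := hsub (hmem i)
    simpa [Finset.mem_Icc] using this
  have hlb : ∀ n (h : n < j), n < g ⟨n, h⟩ := by
    intro n
    induction n with
    | zero => intro h; exact lt_of_lt_of_le Nat.zero_lt_one (hbd ⟨0, h⟩).1
    | succ m ih =>
      intro h
      have h' : m < j := lt_trans (Nat.lt_succ_self m) h
      have := g.strictMono (show (⟨m, h'⟩ : Fin j) < ⟨m+1, h⟩ by simp [Fin.lt_def])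
      exact lt_of_le_of_lt (Nat.succ_le_of_lt (ih h')) this
  have hS_eq : S = Finset.image (fun i => g i) Finset.univ := by
    apply Finset.coe_injective
    rw [Finset.coe_image, Finset.coe_univ, Set.image_univ]
    exact (Finset.range_orderEmbOfFin S hcard).symm
  have hsum_S : ∑ l ∈ S, k l = ∑ i : Fin j, k (g i) := by
    rw [hS_eq]
    exact Finset.sum_image (fun a _ b _ hab => g.injective hab)
  have hrange : ∀ m : ℕ, ∑ l ∈ Finset.Icc 1 m, k l = ∑ i ∈ Finset.range m, k (i + 1) := by
    intro m
    induction m with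
    | zero => simp
    | succ n ih =>
      rw [Finset.sum_Icc_succ_top (Nat.le_add_left 1 n), ih, Finset.sum_range_succ]
  have hsum_I : ∑ l ∈ Finset.Icc 1 j, k l = ∑ i : Fin j, k (i.val + 1) := by
    rw [hrange j, ← Fin.sum_univ_eq_sum_range (fun i => k (i + 1))]
  rw [hsum_S, hsum_I]
  apply Finset.sum_le_sum
  intro i _
  exact hkle (i.val + 1) (g i) (Nat.le_add_left 1 i.val)
    (Nat.succ_le_of_lt (hlb i.val i.isLt)) (hbd i).2

open Finset in
lemma toda_squeeze_top (f : ℝ → ℝ) (K d : ℝ) (hd : 0 < d)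
    (h0 : ∀ x, 0 ≤ f x) (hub : ∀ x, 0 ≤ x → f x ≤ K * Real.exp (-d * x)) :
    Tendsto f atTop (nhds 0) := by
  have h1 : Tendsto (fun x : ℝ => -d * x) atTop atBot := by
    have h2 := (tendsto_id (α := ℝ) (x := atTop)).const_mul_atTop hd
    have h3 := tendsto_neg_atTop_atBot.comp h2
    exact h3.congr fun x => by simp [Function.comp, neg_mul]
  have h3 : Tendsto (fun x : ℝ => K * Real.exp (-d * x)) atTop (nhds 0) := by
    have := (Real.tendsto_exp_atBot.comp h1).const_mul K
    simpa using this
  exact tendsto_of_tendsto_of_tendsto_of_le_of_le' tendsto_const_nhds h3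
    (Eventually.of_forall h0)
    ((eventually_ge_atTop (0:ℝ)).mono fun x hx => hub x hx)

open Finset in
theorem toda_aux_top (N : ℕ) (hN : 2 ≤ N) (k θ0 : ℕ → ℝ)
    (hk : ∀ a b, 1 ≤ a → a < b → b ≤ N → k a < k b)
    (Δ : Finset ℕ → ℝ)
    (hΔnn : ∀ S, 0 ≤ Δ S)
    (hΔpos : ∀ S, S ⊆ Finset.Icc 1 N → 0 < Δ S)
    (τ : ℕ → ℝ → ℝ)
    (hτ : ∀ j x, τ j x = ∑ S ∈ Finset.powersetCard j (Finset.Icc 1 N),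
        Δ S * Real.exp (∑ l ∈ S, (-(k l) * x + θ0 l)))
    (j : ℕ) (hj1 : 1 ≤ j) (hj2 : j ≤ N - 1) :
    Tendsto (fun x : ℝ => τ (j + 1) x * τ (j - 1) x / (τ j x) ^ 2) atTop (nhds 0) := by
  have hkle : ∀ a b, 1 ≤ a → a ≤ b → b ≤ N → k a ≤ k b := by
    intro a b ha hab hb
    rcases eq_or_lt_of_le hab with h | h
    · exact le_of_eq (by rw [h])
    · exact le_of_lt (hk a b ha h hb)
  -- rewritten tau
  have hτ' : ∀ i x, τ i x = ∑ S ∈ Finset.powersetCard i (Finset.Icc 1 N),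
      Δ S * Real.exp (-(∑ l ∈ S, k l) * x + ∑ l ∈ S, θ0 l) := by
    intro i x
    rw [hτ]
    refine Finset.sum_congr rfl fun S _ => ?_
    congr 1
    congr 1
    rw [Finset.sum_add_distrib, ← Finset.sum_mul, Finset.sum_neg_distrib, neg_mul]
  -- minimal exponent sums
  set m : ℕ → ℝ := fun i => ∑ l ∈ Finset.Icc 1 i, k l with hm
  -- the distinguished subset
  have hIccmem : ∀ i : ℕ, i ≤ N → Finset.Icc 1 i ∈ Finset.powersetCard i (Finset.Icc 1 N) := by
    intro i hi
    rw [Finset.mem_powersetCard]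
    constructor
    · exact Finset.Icc_subset_Icc le_rfl hi
    · rw [Nat.card_Icc]; omega
  -- positivity of tau
  have hτpos : ∀ i : ℕ, i ≤ N → ∀ x : ℝ, 0 < τ i x := by
    intro i hi x
    rw [hτ' i x]
    apply Finset.sum_pos'
    · intro S hS
      have := Real.exp_pos (-(∑ l ∈ S, k l) * x + ∑ l ∈ S, θ0 l)
      exact mul_nonneg (hΔnn S) this.le
    · refine ⟨Finset.Icc 1 i, hIccmem i hi, ?_⟩
      exact mul_pos (hΔpos _ (Finset.Icc_subset_Icc le_rfl hi)) (Real.exp_pos _)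
  -- lower bound for tau
  have hτlow : ∀ i : ℕ, i ≤ N → ∀ x : ℝ,
      (Δ (Finset.Icc 1 i) * Real.exp (∑ l ∈ Finset.Icc 1 i, θ0 l)) * Real.exp (-(m i) * x)
        ≤ τ i x := by
    intro i hi x
    rw [hτ' i x]
    have h1 := Finset.single_le_sum
      (f := fun S => Δ S * Real.exp (-(∑ l ∈ S, k l) * x + ∑ l ∈ S, θ0 l))
      (fun S _ => mul_nonneg (hΔnn S) (Real.exp_pos _).le) (hIccmem i hi)
    calc (Δ (Finset.Icc 1 i) * Real.exp (∑ l ∈ Finset.Icc 1 i, θ0 l)) * Real.exp (-(m i) * x)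
        = Δ (Finset.Icc 1 i) * Real.exp (-(m i) * x + ∑ l ∈ Finset.Icc 1 i, θ0 l) := by
          rw [Real.exp_add]; ring
      _ ≤ _ := h1
  -- constants
  set C : ℕ → ℝ := fun i => ∑ S ∈ Finset.powersetCard i (Finset.Icc 1 N),
      Δ S * Real.exp (∑ l ∈ S, θ0 l) with hC
  have hCnn : ∀ i, 0 ≤ C i := by
    intro i
    apply Finset.sum_nonneg
    intro S _
    exact mul_nonneg (hΔnn S) (Real.exp_pos _).le
  -- upper bound for tau, x ≥ 0
  have hτup : ∀ i : ℕ, ∀ x : ℝ, 0 ≤ x → τ i x ≤ C i * Real.exp (-(m i) * x) := by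
    intro i x hx
    rw [hτ' i x, hC]
    rw [Finset.sum_mul]
    apply Finset.sum_le_sum
    intro S hS
    rw [Finset.mem_powersetCard] at hS
    have hmin : m i ≤ ∑ l ∈ S, k l := toda_key_min N i k hkle S hS.1 hS.2
    have hexp : Real.exp (-(∑ l ∈ S, k l) * x + ∑ l ∈ S, θ0 l)
        ≤ Real.exp (-(m i) * x + ∑ l ∈ S, θ0 l) := by
      apply Real.exp_le_exp.mpr
      have : -(∑ l ∈ S, k l) * x ≤ -(m i) * x := by
        apply mul_le_mul_of_nonneg_right _ hx
        linarith
      linarith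
    calc Δ S * Real.exp (-(∑ l ∈ S, k l) * x + ∑ l ∈ S, θ0 l)
        ≤ Δ S * Real.exp (-(m i) * x + ∑ l ∈ S, θ0 l) :=
          mul_le_mul_of_nonneg_left hexp (hΔnn S)
      _ = Δ S * Real.exp (∑ l ∈ S, θ0 l) * Real.exp (-(m i) * x) := by
          rw [Real.exp_add]; ring
  -- index bookkeeping
  obtain ⟨jj, rfl⟩ : ∃ jj, j = jj + 1 := ⟨j - 1, by omega⟩
  have hjN : jj + 1 + 1 ≤ N := by omega
  have hjsub : jj + 1 - 1 = jj := by omega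
  -- m relations
  have hm1 : m (jj + 1 + 1) = m (jj + 1) + k (jj + 1 + 1) := by
    rw [hm]
    exact Finset.sum_Icc_succ_top (by omega) k
  have hm2 : m (jj + 1) = m jj + k (jj + 1) := by
    rw [hm]
    exact Finset.sum_Icc_succ_top (by omega) k
  set d : ℝ := k (jj + 1 + 1) - k (jj + 1) with hd
  have hdpos : 0 < d := by
    have := hk (jj + 1) (jj + 1 + 1) (by omega) (by omega) hjN
    rw [hd]; linarith
  set cj : ℝ := Δ (Finset.Icc 1 (jj + 1)) * Real.exp (∑ l ∈ Finset.Icc 1 (jj + 1), θ0 l)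
    with hcj
  have hcjpos : 0 < cj :=
    mul_pos (hΔpos _ (Finset.Icc_subset_Icc le_rfl (by omega))) (Real.exp_pos _)
  apply toda_squeeze_top _ (C (jj + 1 + 1) * C jj / cj ^ 2) d hdpos
  · intro x
    apply div_nonneg
    · exact mul_nonneg (hτpos _ (by omega) x).le (by rw [hjsub]; exact (hτpos _ (by omega) x).le)
    · positivity
  · intro x hx
    rw [hjsub]
    have h1 : τ (jj + 1 + 1) x * τ jj x
        ≤ (C (jj + 1 + 1) * Real.exp (-(m (jj + 1 + 1)) * x)) * (C jj * Real.exp (-(m jj) * x)) :=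
      mul_le_mul (hτup _ x hx) (hτup _ x hx) (hτpos _ (by omega) x).le
        (mul_nonneg (hCnn _) (Real.exp_pos _).le)
    have h2 : (cj * Real.exp (-(m (jj + 1)) * x)) ^ 2 ≤ (τ (jj + 1) x) ^ 2 := by
      apply pow_le_pow_left₀ (mul_pos hcjpos (Real.exp_pos _)).le (hτlow _ (by omega) x)
    have h3 : τ (jj + 1 + 1) x * τ jj x / (τ (jj + 1) x) ^ 2
        ≤ (C (jj + 1 + 1) * Real.exp (-(m (jj + 1 + 1)) * x)) * (C jj * Real.exp (-(m jj) * x))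
          / (cj * Real.exp (-(m (jj + 1)) * x)) ^ 2 := by
      apply div_le_div₀ (mul_nonneg (mul_nonneg (hCnn _) (Real.exp_pos _).le)
        (mul_nonneg (hCnn _) (Real.exp_pos _).le)) h1
        (pow_pos (mul_pos hcjpos (Real.exp_pos _)) 2) h2
    refine h3.trans (le_of_eq ?_)
    set A := Real.exp (-(m (jj + 1 + 1)) * x) with hA
    set B := Real.exp (-(m jj) * x) with hB
    set D := Real.exp (-(m (jj + 1)) * x) with hD
    set E := Real.exp (-d * x) with hE
    have hAB : A * B = E * D ^ 2 := by
      rw [hA, hB, hD, hE, pow_two, ← Real.exp_add, ← Real.exp_add, ← Real.exp_add]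
      congr 1
      rw [hd]
      linear_combination (-x) * hm1 + x * hm2
    have hDne : D ≠ 0 := by rw [hD]; exact (Real.exp_pos _).ne'
    have hcne : cj ≠ 0 := hcjpos.ne'
    field_simp
    linear_combination (C (jj + 1 + 1) * C jj) * hAB

theorem toda_offdiagonal_vanishing
    (N : ℕ) (hN : 2 ≤ N)
    (k θ0 : ℕ → ℝ)
    (hk : ∀ a b, 1 ≤ a → a < b → b ≤ N → k a < k b)
    (Δ : Finset ℕ → ℝ)
    (hΔ : ∀ S, Δ S = ∏ l ∈ S, ∏ m ∈ S.filter (fun m => l < m), (k l - k m) ^ 2)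
    (τ : ℕ → ℝ → ℝ)
    (hτ : ∀ j x, τ j x = ∑ S ∈ Finset.powersetCard j (Finset.Icc 1 N),
        Δ S * Real.exp (∑ l ∈ S, (-(k l) * x + θ0 l))) :
    ∀ j, 1 ≤ j → j ≤ N - 1 →
      Tendsto (fun x : ℝ => τ (j + 1) x * τ (j - 1) x / (τ j x) ^ 2) atTop (nhds 0) ∧
      Tendsto (fun x : ℝ => τ (j + 1) x * τ (j - 1) x / (τ j x) ^ 2) atBot (nhds 0) := by
  intro j hj1 hj2
  have hΔnn : ∀ S, 0 ≤ Δ S := by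
    intro S
    rw [hΔ]
    positivity
  have hΔpos : ∀ S, S ⊆ Finset.Icc 1 N → 0 < Δ S := by
    intro S hsub
    rw [hΔ]
    apply Finset.prod_pos
    intro l hl
    apply Finset.prod_pos
    intro mm hmm
    rw [Finset.mem_filter] at hmm
    obtain ⟨hmmS, hlm⟩ := hmm
    have h1 : 1 ≤ l := (Finset.mem_Icc.mp (hsub hl)).1
    have h2 : mm ≤ N := (Finset.mem_Icc.mp (hsub hmmS)).2
    exact pow_two_pos_of_ne_zero (sub_ne_zero.mpr (hk l mm h1 hlm h2).ne)
  refine ⟨toda_aux_top N hN k θ0 hk Δ hΔnn hΔpos τ hτ j hj1 hj2, ?_⟩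
  -- reflection
  set r : ℕ → ℕ := fun l => N + 1 - l with hr
  have hrr : ∀ l, 1 ≤ l → l ≤ N → r (r l) = l := by
    intro l h1 h2
    show N + 1 - (N + 1 - l) = l
    omega
  have hrmem : ∀ l, l ∈ Finset.Icc 1 N → r l ∈ Finset.Icc 1 N := by
    intro l hl
    rw [Finset.mem_Icc] at hl ⊢
    show 1 ≤ N + 1 - l ∧ N + 1 - l ≤ N
    omega
  have hrinj : ∀ S : Finset ℕ, S ⊆ Finset.Icc 1 N → Set.InjOn r S := by
    intro S hsub a ha b hb hab
    have h1 := Finset.mem_Icc.mp (hsub ha)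
    have h2 := Finset.mem_Icc.mp (hsub hb)
    simp only [hr] at hab
    omega
  have himg : ∀ (i : ℕ) (S : Finset ℕ), S ∈ Finset.powersetCard i (Finset.Icc 1 N) →
      S.image r ∈ Finset.powersetCard i (Finset.Icc 1 N) := by
    intro i S hS
    rw [Finset.mem_powersetCard] at hS ⊢
    refine ⟨?_, ?_⟩
    · intro a ha
      rw [Finset.mem_image] at ha
      obtain ⟨b, hb, rfl⟩ := ha
      exact hrmem b (hS.1 hb)
    · rw [Finset.card_image_of_injOn (hrinj S hS.1), hS.2]
  have himg2 : ∀ S : Finset ℕ, S ⊆ Finset.Icc 1 N → (S.image r).image r = S := by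
    intro S hsub
    ext a
    simp only [Finset.mem_image]
    constructor
    · rintro ⟨b, ⟨c, hc, rfl⟩, rfl⟩
      have hb := Finset.mem_Icc.mp (hsub hc)
      rwa [hrr c hb.1 hb.2]
    · intro ha
      have h1 := Finset.mem_Icc.mp (hsub ha)
      exact ⟨r a, ⟨a, ha, rfl⟩, hrr a h1.1 h1.2⟩
  set k' : ℕ → ℝ := fun l => -k (r l) with hk'def
  set θ' : ℕ → ℝ := fun l => θ0 (r l) with hθ'def
  set Δ' : Finset ℕ → ℝ := fun S => Δ (S.image r) with hΔ'def
  set τ' : ℕ → ℝ → ℝ := fun i x => τ i (-x) with hτ'def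
  have hk' : ∀ a b, 1 ≤ a → a < b → b ≤ N → k' a < k' b := by
    intro a b ha hab hb
    simp only [hk'def, hr]
    have h1 : k (N + 1 - b) < k (N + 1 - a) := hk _ _ (by omega) (by omega) (by omega)
    linarith
  have hΔ'nn : ∀ S, 0 ≤ Δ' S := fun S => hΔnn _
  have hΔ'pos : ∀ S, S ⊆ Finset.Icc 1 N → 0 < Δ' S := by
    intro S hsub
    apply hΔpos
    intro a ha
    rw [Finset.mem_image] at ha
    obtain ⟨b, hb, rfl⟩ := ha
    exact hrmem b (hsub hb)
  have hτ'eq : ∀ i x, τ' i x = ∑ S ∈ Finset.powersetCard i (Finset.Icc 1 N),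
      Δ' S * Real.exp (∑ l ∈ S, (-(k' l) * x + θ' l)) := by
    intro i x
    simp only [hτ'def]
    rw [hτ i (-x)]
    refine Finset.sum_nbij' (fun S => S.image r) (fun S => S.image r)
      (himg i) (himg i) ?_ ?_ ?_
    · intro S hS
      exact himg2 S (Finset.mem_powersetCard.mp hS).1
    · intro S hS
      exact himg2 S (Finset.mem_powersetCard.mp hS).1
    · intro S hS
      have hsub := (Finset.mem_powersetCard.mp hS).1
      simp only [hΔ'def]
      rw [himg2 S hsub]
      congr 1
      congr 1
      rw [Finset.sum_image (fun a ha b hb h => hrinj S hsub ha hb h)]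
      refine Finset.sum_congr rfl fun l hl => ?_
      have hbd := Finset.mem_Icc.mp (hsub hl)
      simp only [hk'def, hθ'def]
      rw [hrr l hbd.1 hbd.2]
      ring
  have hmain := toda_aux_top N hN k' θ' hk' Δ' hΔ'nn hΔ'pos τ' hτ'eq j hj1 hj2
  have hcomp := hmain.comp tendsto_neg_atBot_atTop
  refine Tendsto.congr (fun x => ?_) hcomp
  simp only [hτ'def, Function.comp, neg_neg]
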